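/- Let a ∈ ℤ with |a - 1| ≥ 2 and b ∈ ℕ, b ≥ 2. If η is a root of unity of order n > 2 with r_{a,b}(η) = 0 and n does not divide b - 1, then |a - 1| ≤ 2, i.e., |a-1| = 2. -/

import Mathlib

open Polynomial Real


lemma exists_good_k (d : ℕ) (hd : 2 ≤ d) :
    ∃ k : ℕ, Nat.Coprime k d ∧ d ≤ 6 * k ∧ 6 * k ≤ 5 * d := by
  rcases Nat.even_or_odd d with he | ho
  · obtain ⟨m, hm⟩ := he
    have hm2 : d / 2 = m := by omega
    rcases Nat.even_or_odd m with he2 | ho2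
    · -- 4 ∣ d : take k = d/2 + 1
      obtain ⟨m2, hm22⟩ := he2
      refine ⟨d / 2 + 1, ?_, by omega, by omega⟩
      have hk2 : (d / 2 + 1) % 2 = 1 := by omega
      have h2k : 2 * (d / 2 + 1) = d + 2 := by omega
      set k := d / 2 + 1 with hk
      have hg1 : Nat.gcd k d ∣ k := Nat.gcd_dvd_left _ _
      have hg2 : Nat.gcd k d ∣ d := Nat.gcd_dvd_right _ _
      have hg3 : Nat.gcd k d ∣ 2 := by
        have h' : Nat.gcd k d ∣ 2 * k := hg1.mul_left 2
        rw [h2k] at h'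
        have := Nat.dvd_sub h' hg2
        simpa using this
      have hglt : Nat.gcd k d ≤ 2 := Nat.le_of_dvd (by norm_num) hg3
      have hgpos : 0 < Nat.gcd k d := Nat.gcd_pos_of_pos_left d (by omega)
      interval_cases h : Nat.gcd k d
      · exact h
      · exfalso; omega
    · obtain ⟨m2, hm22⟩ := ho2
      rcases eq_or_lt_of_le hd with h2 | h6
      · exact ⟨1, by simp [Nat.coprime_one_left], by omega, by omega⟩
      · -- d ≡ 2 mod 4, d ≥ 6: k = d/2 - 2
        have hd6 : 6 ≤ d := by omega
        refine ⟨d / 2 - 2, ?_, by omega, by omega⟩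
        have hk2 : (d / 2 - 2) % 2 = 1 := by omega
        have h2k : 2 * (d / 2 - 2) = d - 4 := by omega
        set k := d / 2 - 2 with hk
        have hg1 : Nat.gcd k d ∣ k := Nat.gcd_dvd_left _ _
        have hg2 : Nat.gcd k d ∣ d := Nat.gcd_dvd_right _ _
        have hg3 : Nat.gcd k d ∣ 4 := by
          have h' : Nat.gcd k d ∣ 2 * k := hg1.mul_left 2
          rw [h2k] at h'
          have := Nat.dvd_sub hg2 h'
          simpa [show d - (d - 4) = 4 by omega] using this
        have hglt : Nat.gcd k d ≤ 4 := Nat.le_of_dvd (by norm_num) hg3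
        have hgpos : 0 < Nat.gcd k d := Nat.gcd_pos_of_pos_left d (by omega)
        interval_cases h : Nat.gcd k d
        · exact h
        · exfalso; omega
        · exfalso; omega
        · exfalso; omega
  · -- d odd : k = (d-1)/2
    obtain ⟨m, hm⟩ := ho
    have hd3 : 3 ≤ d := by omega
    refine ⟨(d - 1) / 2, ?_, by omega, by omega⟩
    have h2k : 2 * ((d - 1) / 2) = d - 1 := by omega
    set k := (d - 1) / 2 with hk
    have hg1 : Nat.gcd k d ∣ k := Nat.gcd_dvd_left _ _
    have hg2 : Nat.gcd k d ∣ d := Nat.gcd_dvd_right _ _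
    have hg3 : Nat.gcd k d ∣ 1 := by
      have h' : Nat.gcd k d ∣ 2 * k := hg1.mul_left 2
      rw [h2k] at h'
      have := Nat.dvd_sub hg2 h'
      simpa [show d - (d - 1) = 1 by omega] using this
    exact Nat.dvd_one.mp hg3


lemma cos_le_half {x : ℝ} (h1 : π / 3 ≤ x) (h2 : x ≤ 5 * π / 3) : Real.cos x ≤ 1 / 2 := by
  rcases le_or_gt x π with hx | hx
  · calc Real.cos x ≤ Real.cos (π / 3) :=
          Real.cos_le_cos_of_nonneg_of_le_pi (by positivity) hx h1
      _ = 1 / 2 := Real.cos_pi_div_three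
  · have : Real.cos x = Real.cos (2 * π - (2 * π - x)) := by ring_nf
    rw [this, Real.cos_two_pi_sub]
    calc Real.cos (2 * π - x) ≤ Real.cos (π / 3) := by
          apply Real.cos_le_cos_of_nonneg_of_le_pi
          · have := pi_pos; linarith
          · linarith
          · linarith
      _ = 1 / 2 := Real.cos_pi_div_three

lemma exists_good_primroot (d : ℕ) (hd : 2 ≤ d)
    (hk : ∃ k : ℕ, Nat.Coprime k d ∧ d ≤ 6 * k ∧ 6 * k ≤ 5 * d) :
    ∃ ζ : ℂ, IsPrimitiveRoot ζ d ∧ ζ.re ≤ 1 / 2 := by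
  obtain ⟨k, hco, hlb, hub⟩ := hk
  have hd0 : (d : ℝ) > 0 := by positivity
  refine ⟨Complex.exp (2 * π * Complex.I * (k / d)), Complex.isPrimitiveRoot_exp_of_coprime k d (by omega) hco, ?_⟩
  have hre : (Complex.exp (2 * π * Complex.I * (k / d))).re = Real.cos (2 * π * k / d) := by
    rw [show (2 * ↑π * Complex.I * (↑k / ↑d) : ℂ) = ((2 * π * k / d : ℝ) : ℂ) * Complex.I by
      push_cast; ring]
    exact Complex.exp_ofReal_mul_I_re _
  rw [hre]
  apply cos_le_half
  · rw [div_le_div_iff₀ (by norm_num) hd0]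
    have : (d : ℝ) ≤ 6 * k := by exact_mod_cast hlb
    nlinarith [pi_pos]
  · rw [div_le_div_iff₀ hd0 (by norm_num)]
    have : 6 * (k : ℝ) ≤ 5 * d := by exact_mod_cast hub
    nlinarith [pi_pos]

/-- `r_{a,b}(X) = 1 + aX + ⋯ + aX^{b-1} + X^b` over `ℤ`. -/
noncomputable def rPoly (a : ℤ) (b : ℕ) : Polynomial ℤ :=
  1 + X ^ b + C a * ∑ i ∈ Finset.Ico 1 b, X ^ i

lemma rPoly_root_identity (a : ℤ) (c : ℕ) (ξ : ℂ)
    (h : ((rPoly a (c+1)).map (Int.castRingHom ℂ)).IsRoot ξ) :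
    ξ ^ (c + 2) - 1 = (1 - (a : ℂ)) * (ξ ^ (c + 1) - ξ) := by
  have hS : (ξ - 1) * (∑ i ∈ Finset.Ico 1 (c+1), ξ ^ i) = ξ ^ (c+1) - ξ := by
    have hg : (∑ i ∈ Finset.range (c+1), ξ ^ i) * (ξ - 1) = ξ ^ (c+1) - 1 :=
      geom_sum_mul ξ (c+1)
    rw [Finset.range_eq_Ico, Finset.sum_eq_sum_Ico_succ_bot (by omega)] at hg
    rw [pow_zero] at hg
    linear_combination hg
  have hE : 1 + ξ ^ (c+1) + (a : ℂ) * (∑ i ∈ Finset.Ico 1 (c+1), ξ ^ i) = 0 := by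
    have h' := h
    simp only [rPoly, IsRoot.def, Polynomial.map_add, Polynomial.map_one, Polynomial.map_pow,
      Polynomial.map_X, Polynomial.map_mul, Polynomial.map_C, Polynomial.map_sum,
      eval_add, eval_one, eval_pow, eval_X, eval_mul, eval_C, eval_finset_sum,
      Int.coe_castRingHom] at h'
    exact h'
  linear_combination (ξ - 1) * hE - (a : ℂ) * hS

theorem stmt_12 (a : ℤ) (ha : 2 ≤ |a - 1|) (b : ℕ) (hb : 2 ≤ b)
    (η : ℂ) (n : ℕ) (hn : 2 < n)
    (hord : η ^ n = 1 ∧ ∀ m : ℕ, 0 < m → m < n → η ^ m ≠ 1)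
    (hroot : ((rPoly a b).map (Int.castRingHom ℂ)).IsRoot η)
    (hndvd : ¬ (n ∣ b - 1)) :
    |a - 1| = 2 := by
  have hn0 : 0 < n := by omega
  have h1 : IsPrimitiveRoot η n := (IsPrimitiveRoot.iff hn0).mpr ⟨hord.1, hord.2⟩
  obtain ⟨c, rfl⟩ : ∃ c, b = c + 1 := ⟨b - 1, by omega⟩
  have hc1 : 1 ≤ c := by omega
  rw [show c + 1 - 1 = c from rfl] at hndvd
  -- ζ₀ = η^c has order d ∣ n, d ≥ 2
  set ζ₀ := η ^ c with hζ₀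
  set d := orderOf ζ₀ with hd
  have h₀ : IsPrimitiveRoot ζ₀ d := IsPrimitiveRoot.orderOf ζ₀
  have hdn : d ∣ n := orderOf_dvd_of_pow_eq_one
    (by rw [hζ₀, ← pow_mul, mul_comm, pow_mul, h1.pow_eq_one, one_pow])
  have hdpos : 0 < d := Nat.pos_of_dvd_of_pos hdn hn0
  have hd2 : 2 ≤ d := by
    rcases Nat.lt_or_ge d 2 with h | h
    · exfalso
      have hd1 : d = 1 := by omega
      have : ζ₀ = 1 := orderOf_eq_one_iff.mp (by rw [← hd, hd1])
      exact hndvd ((h1.pow_eq_one_iff_dvd c).mp this)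
    · exact h
  -- choose a primitive d-th root with small real part
  obtain ⟨ζs, hζs, hre⟩ := exists_good_primroot d hd2 (exists_good_k d hd2)
  haveI : NeZero d := ⟨by omega⟩
  haveI : NeZero n := ⟨by omega⟩
  obtain ⟨m, hmlt, hm⟩ := h₀.eq_pow_of_pow_eq_one hζs.pow_eq_one
  have hmco : Nat.Coprime m d := (h₀.pow_iff_coprime hdpos m).mp (by rw [hm]; exact hζs)
  obtain ⟨v, hv⟩ := ZMod.unitsMap_surjective hdn (ZMod.unitOfCoprime m hmco)
  set j := (v : ZMod n).val with hj
  have hjco : Nat.Coprime j n := ZMod.val_coe_unit_coprime v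
  have hjm : (j : ZMod d) = (m : ZMod d) := by
    have h1' := congrArg (Units.val) hv
    rw [ZMod.coe_unitOfCoprime] at h1'
    rw [← h1']
    simp [ZMod.unitsMap, hj, ZMod.natCast_val, ZMod.castHom_apply]
  have hmod : j ≡ m [MOD d] := (ZMod.natCast_eq_natCast_iff _ _ _).mp hjm
  have hpow : ζ₀ ^ j = ζ₀ ^ m := by
    rw [← pow_mod_orderOf ζ₀ j, ← pow_mod_orderOf ζ₀ m, ← hd, hmod]
  set ξ := η ^ j with hξdef
  have hξp : IsPrimitiveRoot ξ n := h1.pow_of_coprime j hjco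
  have hξc : ξ ^ c = ζs := by
    rw [hξdef, ← pow_mul, mul_comm, pow_mul, ← hζ₀, hpow, hm]
  -- ξ is a root of rPoly
  have hcomp : (algebraMap ℚ ℂ).comp (Int.castRingHom ℚ) = Int.castRingHom ℂ :=
    RingHom.ext_int _ _
  have hQ : Polynomial.aeval η ((rPoly a (c+1)).map (Int.castRingHom ℚ)) = 0 := by
    rw [aeval_def, ← eval_map, Polynomial.map_map, hcomp]
    exact hroot
  have hdvd2 : cyclotomic n ℚ ∣ (rPoly a (c+1)).map (Int.castRingHom ℚ) := by
    rw [cyclotomic_eq_minpoly_rat h1 hn0]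
    exact minpoly.dvd ℚ η hQ
  have hroot2 : ((rPoly a (c+1)).map (Int.castRingHom ℂ)).IsRoot ξ := by
    obtain ⟨g, hg⟩ := hdvd2
    have haev : Polynomial.aeval ξ ((rPoly a (c+1)).map (Int.castRingHom ℚ)) = 0 := by
      rw [hg, map_mul]
      have hcy : Polynomial.aeval ξ (cyclotomic n ℚ) = 0 := by
        rw [aeval_def, ← eval_map, map_cyclotomic]
        exact hξp.isRoot_cyclotomic hn0
      rw [hcy, zero_mul]
    rw [aeval_def, ← eval_map, Polynomial.map_map, hcomp] at haev
    exact haev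
  have hEq := rPoly_root_identity a c ξ hroot2
  -- norms
  have hnorm : ‖ξ‖ = 1 := hξp.norm'_eq_one (by omega)
  have habs : ‖ξ ^ (c+2) - 1‖ = ‖1 - (a:ℂ)‖ * ‖ξ ^ c - 1‖ := by
    rw [hEq, norm_mul, show ξ ^ (c+1) - ξ = ξ * (ξ ^ c - 1) by ring, norm_mul, hnorm, one_mul]
  have h2 : ‖ξ ^ (c+2) - 1‖ ≤ 2 := by
    calc ‖ξ ^ (c+2) - 1‖ ≤ ‖ξ ^ (c+2)‖ + ‖(1:ℂ)‖ := norm_sub_le _ _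
      _ = 2 := by rw [norm_pow, hnorm, one_pow, norm_one]; norm_num
  have h3 : 1 ≤ ‖ξ ^ c - 1‖ := by
    rw [hξc]
    have h4 : ‖ζs‖ = 1 := hζs.norm'_eq_one (by omega)
    have h5 : Complex.normSq ζs = 1 := by
      have := Complex.normSq_eq_norm_sq ζs
      rw [h4] at this; simpa using this
    have h6 : Complex.normSq (ζs - 1) = Complex.normSq ζs - 2 * ζs.re + 1 := by
      simp [Complex.normSq_apply, Complex.sub_re, Complex.sub_im]; ring
    have h7 : 1 ≤ Complex.normSq (ζs - 1) := by rw [h6, h5]; linarith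
    have h8 := Complex.normSq_eq_norm_sq (ζs - 1)
    nlinarith [norm_nonneg (ζs - 1)]
  have h6' : ‖1 - (a:ℂ)‖ = ((|a - 1| : ℤ) : ℝ) := by
    rw [show (1 - (a:ℂ)) = (((1 - a : ℤ)):ℂ) by push_cast; ring, Complex.norm_intCast]
    rw [← Int.cast_abs]
    norm_cast
    rw [abs_sub_comm]
  have hfin : ((|a - 1| : ℤ) : ℝ) ≤ 2 := by
    have := habs
    rw [h6'] at this
    nlinarith [h2, h3, abs_nonneg (a-1), (by exact_mod_cast abs_nonneg (a-1) : (0:ℝ) ≤ ((|a-1|:ℤ):ℝ))]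
  have hle : |a - 1| ≤ 2 := by exact_mod_cast hfin
  exact le_antisymm hle ha
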